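/- A twisted right gyrogroup (S, o) is a twisted gyrogroup if and only if, in the associated group G_S S (in which x·y = f(x,y)·(x o y) for x, y ∈ S), the subset S is a twisted subgroup (i.e., 1 ∈ S and x, y ∈ S imply xyx ∈ S) with f(x, y)⁻¹ = f(y, x) for all x, y ∈ S; in that case xyx = (x o y) o x for x, y ∈ S. -/

import Mathlib

/-- A right loop: identity `e` and bijective right translations. -/
structure RightLoop (S : Type*) where
  op : S → S → S
  e : S
  op_e : ∀ x, op x e = x
  e_op : ∀ x, op e x = x
  bij : ∀ a, Function.Bijective (fun x => op x a)

/-- The inner mapping group: the subgroup of `Equiv.Perm S` generated by the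
right inner mappings `f y z`. -/
def innerGroup {S : Type*} (f : S → S → Equiv.Perm S) : Subgroup (Equiv.Perm S) :=
  Subgroup.closure (Set.range (fun p : S × S => f p.1 p.2))

/-- A twisted right gyrogroup `(S, o)` is a twisted gyrogroup (i.e. satisfies the right
loop property `f(x,y) = f(x, x o y)`) if and only if, in the associated group `G_S S`
(here axiomatized: `ι : S → G`, `ψ` an embedding of the inner mappings with
`ι x * ι y = ψ (f x y) * ι (x o y)` and unique `H`-`S` decompositions), the subset
`S` is a twisted subgroup with `f(x,y)⁻¹ = f(y,x)`; in that case
`x y x = (x o y) o x` in the group. -/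
theorem twisted_gyrogroup_iff_twisted_subgroup {S : Type*} (L : RightLoop S)
    (inv : S → S) (hinv : ∀ x, L.op (inv x) x = L.e)
    (f : S → S → Equiv.Perm S)
    (hf : ∀ y z x, L.op (f y z x) (L.op y z) = L.op (L.op x y) z)
    (hff : ∀ y, f (inv y) y = 1)
    (htw : ∀ y z x w, w ≠ L.e →
      f y z (L.op x w) = L.op (inv (f y z (inv x))) (f y z w))
    {G : Type*} [Group G] (ι : S → G) (ψ : Equiv.Perm S → G)
    (hψmul : ∀ h k : Equiv.Perm S, ψ (h * k) = ψ k * ψ h)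
    (hψ1 : ψ 1 = 1) (hι1 : ι L.e = 1)
    (huniq : ∀ h ∈ innerGroup f, ∀ h' ∈ innerGroup f, ∀ s s' : S,
      ψ h * ι s = ψ h' * ι s' → h = h' ∧ s = s')
    (hrel : ∀ x y : S, ι x * ι y = ψ (f x y) * ι (L.op x y)) :
    ((∀ x y : S, f x y = f x (L.op x y)) ↔
      ((∀ x y : S, ∃ z : S, ι x * ι y * ι x = ι z) ∧
        (∀ x y : S, (f x y)⁻¹ = f y x))) ∧
    ((∀ x y : S, f x y = f x (L.op x y)) →
      ∀ x y : S, ι x * ι y * ι x = ι (L.op (L.op x y) x)) := by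
  -- right cancellation
  have cancel : ∀ (a : S) {x y : S}, L.op x a = L.op y a → x = y := by
    intro a x y h
    exact (L.bij a).1 h
  -- f y z e = e
  have fe : ∀ y z, f y z L.e = L.e := by
    intro y z
    apply cancel (L.op y z)
    rw [hf y z L.e, L.e_op, L.e_op]
  -- f e z = 1
  have f_e_left : ∀ z x, f L.e z x = x := by
    intro z x
    apply cancel z
    have h := hf L.e z x
    rwa [L.e_op, L.op_e] at h
  -- x ∘ inv x = e
  have opinv : ∀ x, L.op x (inv x) = L.e := by
    intro x
    apply cancel x
    have h := hf (inv x) x x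
    rw [hff, Equiv.Perm.one_apply, hinv, L.op_e] at h
    rw [← h, L.e_op]
  have invinv : ∀ x, inv (inv x) = x := by
    intro x
    apply cancel (inv x)
    rw [hinv, opinv]
  have inve : inv L.e = L.e := by
    apply cancel L.e
    rw [hinv, L.e_op]
  -- group basics
  have iotainv_l : ∀ x, ι (inv x) * ι x = 1 := by
    intro x
    rw [hrel, hff, hψ1, hinv, hι1, one_mul]
  have iotaInv : ∀ x, (ι x)⁻¹ = ι (inv x) := by
    intro x
    exact inv_eq_of_mul_eq_one_left (iotainv_l x)
  have iotainv_r : ∀ x, ι x * ι (inv x) = 1 := by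
    intro x
    rw [← iotaInv, mul_inv_cancel]
  -- memberships
  have memf : ∀ a b, f a b ∈ innerGroup f := by
    intro a b
    exact Subgroup.subset_closure ⟨(a, b), rfl⟩
  -- f x (inv x) = 1
  have finvr : ∀ x, f x (inv x) = 1 := by
    intro x
    have h1 : ψ (f x (inv x)) * ι (L.op x (inv x)) = ψ 1 * ι L.e := by
      rw [← hrel, iotainv_r, hψ1, hι1, one_mul]
    exact (huniq _ (memf _ _) _ (Subgroup.one_mem _) _ _ h1).1
  -- (u∘b)∘(inv b) = u
  have RR' : ∀ u b, L.op (L.op u b) (inv b) = u := by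
    intro u b
    have h := hf b (inv b) u
    rw [finvr, Equiv.Perm.one_apply, opinv, L.op_e] at h
    exact h.symm
  -- ψ of inverse
  have ψinv : ∀ h : Equiv.Perm S, ψ h⁻¹ = (ψ h)⁻¹ := by
    intro h
    have h1 : ψ h⁻¹ * ψ h = 1 := by rw [← hψmul, mul_inv_cancel, hψ1]
    exact (inv_eq_of_mul_eq_one_left h1).symm
  -- pointwise form of the twisted condition combined with hf
  have T2 : ∀ a b w c, w ≠ L.e →
      f (L.op w a) b (f w a c) = f (f a b w) (L.op a b) (inv (f a b (inv c))) := by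
    intro a b w c hw
    apply cancel (L.op (L.op w a) b)
    have lhs1 := hf (L.op w a) b (f w a c)
    -- lhs1 : op (f (w∘a) b (f w a c)) (op (w∘a) b) = op (op (f w a c) (w∘a)) b
    have lhs2 := hf w a c
    -- lhs2 : op (f w a c) (op w a) = op (op c w) a
    have rhs1 := hf (f a b w) (L.op a b) (inv (f a b (inv c)))
    -- rhs1 : op (f (fabw) (a∘b) X) (op (fabw) (a∘b)) = op (op X (fabw)) (a∘b)
    have e1 : L.op (f a b w) (L.op a b) = L.op (L.op w a) b := hf a b w
    have e2 : L.op (inv (f a b (inv c))) (f a b w) = f a b (L.op c w) :=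
      (htw a b c w hw).symm
    rw [e1, e2] at rhs1
    have e3 : L.op (f a b (L.op c w)) (L.op a b) = L.op (L.op (L.op c w) a) b :=
      hf a b (L.op c w)
    rw [e3] at rhs1
    rw [lhs1, lhs2, rhs1]
  -- ψ (f a b) as a product of ι's
  have ψprod : ∀ a b, ψ (f a b) = ι a * ι b * (ι (L.op a b))⁻¹ := by
    intro a b
    rw [eq_mul_inv_iff_mul_eq, ← hrel]
  -- conjugation formula: moving ι past ψ of a generator
  have CONJ : ∀ a b t, t ≠ L.e →
      ι t * ψ (f a b) =
        ψ ((⟨inv, inv, invinv, invinv⟩ : Equiv.Perm S) * f a b *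
            ⟨inv, inv, invinv, invinv⟩) * ι (f a b t) := by
    intro a b t ht
    have key : (f (f a b t) (L.op a b))⁻¹ * (f (L.op t a) b * f t a) =
        (⟨inv, inv, invinv, invinv⟩ : Equiv.Perm S) * f a b *
          ⟨inv, inv, invinv, invinv⟩ := by
      apply Equiv.ext
      intro c
      have t2 := T2 a b t c ht
      calc ((f (f a b t) (L.op a b))⁻¹ * (f (L.op t a) b * f t a)) c
          = (f (f a b t) (L.op a b))⁻¹ (f (L.op t a) b (f t a c)) := rfl
        _ = (f (f a b t) (L.op a b))⁻¹
              (f (f a b t) (L.op a b) (inv (f a b (inv c)))) := by rw [t2]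
        _ = inv (f a b (inv c)) := Equiv.symm_apply_apply _ _
        _ = ((⟨inv, inv, invinv, invinv⟩ : Equiv.Perm S) * f a b *
              ⟨inv, inv, invinv, invinv⟩) c := rfl
    rw [← key]
    have A1 := hrel t a
    have A2 := hrel (L.op t a) b
    have A3 := hrel (f a b t) (L.op a b)
    have HF : L.op (f a b t) (L.op a b) = L.op (L.op t a) b := hf a b t
    have e4 : ι (L.op (L.op t a) b) =
        (ψ (f (f a b t) (L.op a b)))⁻¹ * (ι (f a b t) * ι (L.op a b)) := by
      rw [eq_inv_mul_iff_mul_eq, A3, HF]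
    calc ι t * ψ (f a b)
        = ι t * (ι a * ι b * (ι (L.op a b))⁻¹) := by rw [ψprod]
      _ = ((ι t * ι a) * ι b) * (ι (L.op a b))⁻¹ := by group
      _ = ((ψ (f t a) * ι (L.op t a)) * ι b) * (ι (L.op a b))⁻¹ := by rw [A1]
      _ = (ψ (f t a) * (ι (L.op t a) * ι b)) * (ι (L.op a b))⁻¹ := by group
      _ = (ψ (f t a) * (ψ (f (L.op t a) b) * ι (L.op (L.op t a) b))) *
            (ι (L.op a b))⁻¹ := by rw [A2]
      _ = (ψ (f t a) * (ψ (f (L.op t a) b) *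
            ((ψ (f (f a b t) (L.op a b)))⁻¹ * (ι (f a b t) * ι (L.op a b))))) *
            (ι (L.op a b))⁻¹ := by rw [← e4]
      _ = ψ (f t a) * ψ (f (L.op t a) b) * (ψ (f (f a b t) (L.op a b)))⁻¹ *
            ι (f a b t) := by group
      _ = ψ ((f (f a b t) (L.op a b))⁻¹ * (f (L.op t a) b * f t a)) *
            ι (f a b t) := by
            rw [hψmul, hψmul, ψinv]
  -- main consequences of the right loop property
  have MAIN : (∀ x y : S, f x y = f x (L.op x y)) →
      (∀ x y : S, ι x * ι y * ι x = ι (L.op (L.op x y) x)) ∧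
        (∀ x y : S, (f x y)⁻¹ = f y x) := by
    intro hA
    -- B1 : f (a∘b) a = (f a b)⁻¹
    have L1 : ∀ a b, f (L.op a b) (inv b) = (f a b)⁻¹ := by
      intro a b
      have e1 := hrel (L.op a b) (inv b)
      rw [RR'] at e1
      have e0 : ι (L.op a b) = (ψ (f a b))⁻¹ * (ι a * ι b) := by
        rw [eq_inv_mul_iff_mul_eq, ← hrel]
      have h1 : ψ (f (L.op a b) (inv b)) * ι a = ψ (f a b)⁻¹ * ι a := by
        calc ψ (f (L.op a b) (inv b)) * ι a = ι (L.op a b) * ι (inv b) := e1.symm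
          _ = ((ψ (f a b))⁻¹ * (ι a * ι b)) * ι (inv b) := by rw [e0]
          _ = (ψ (f a b))⁻¹ * (ι a * (ι b * ι (inv b))) := by group
          _ = ψ (f a b)⁻¹ * ι a := by rw [iotainv_r, mul_one, ψinv]
      exact (huniq _ (memf _ _) _ ((innerGroup f).inv_mem (memf a b)) _ _ h1).1
    have B1 : ∀ a b, f (L.op a b) a = (f a b)⁻¹ := by
      intro a b
      have h := L1 a b
      rwa [hA (L.op a b) (inv b), RR'] at h
    have TW : ∀ x y : S, ι x * ι y * ι x = ι (L.op (L.op x y) x) := by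
      intro x y
      calc ι x * ι y * ι x = ψ (f x y) * ι (L.op x y) * ι x := by rw [hrel]
        _ = ψ (f x y) * (ψ (f (L.op x y) x) * ι (L.op (L.op x y) x)) := by
            rw [mul_assoc, hrel]
        _ = ψ (f (L.op x y) x * f x y) * ι (L.op (L.op x y) x) := by
            rw [hψmul]; group
        _ = ι (L.op (L.op x y) x) := by rw [B1, inv_mul_cancel, hψ1, one_mul]
    refine ⟨TW, ?_⟩
    -- F2
    have F2 : ∀ p q, p ≠ L.e →
        f (f p q (inv p)) q =
          (⟨inv, inv, invinv, invinv⟩ : Equiv.Perm S) * (f p q)⁻¹ *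
            ⟨inv, inv, invinv, invinv⟩ := by
      intro p q hp
      have s0q : L.op (f p q (inv p)) (L.op p q) = q := by
        have h := hf p q (inv p)
        rwa [hinv, L.e_op] at h
      have step : f (f p q (inv p)) (L.op p q) =
          (⟨inv, inv, invinv, invinv⟩ : Equiv.Perm S) * (f p q)⁻¹ *
            ⟨inv, inv, invinv, invinv⟩ := by
        apply Equiv.ext
        intro d
        have hw : inv p ≠ L.e := by
          intro h
          exact hp (by rw [← invinv p, h, inve])
        have t2 := T2 p q (inv p) (inv ((f p q)⁻¹ (inv d))) hw
        rw [hinv] at t2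
        rw [hff, Equiv.Perm.one_apply, f_e_left] at t2
        rw [invinv, show ∀ x, (f p q) ((f p q)⁻¹ x) = x from fun x => Equiv.apply_symm_apply _ x, invinv] at t2
        exact t2.symm
      have hAs := hA (f p q (inv p)) (L.op p q)
      rw [s0q] at hAs
      rw [← hAs, step]
    -- left division
    have Ldiv : ∀ p q, L.op p (L.op (f p q (inv p)) q) = q := by
      intro p q
      by_cases hp : p = L.e
      · subst hp
        rw [inve, f_e_left, L.e_op, L.e_op]
      · have hs0 : f p q (inv p) ≠ L.e := by
          intro h
          apply hp
          have h2 : inv p = L.e := (f p q).injective (by rw [h, fe])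
          rw [← invinv p, h2, inve]
        have hinvs0 : inv (f p q (inv p)) ≠ L.e := by
          intro h
          exact hs0 (by rw [← invinv (f p q (inv p)), h, inve])
        have hc := CONJ (f p q (inv p)) q (inv (f p q (inv p))) hinvs0
        have hk : (⟨inv, inv, invinv, invinv⟩ : Equiv.Perm S) *
            f (f p q (inv p)) q * ⟨inv, inv, invinv, invinv⟩ = (f p q)⁻¹ := by
          rw [F2 p q hp]
          apply Equiv.ext
          intro c
          show inv (inv ((f p q)⁻¹ (inv (inv c)))) = (f p q)⁻¹ c
          rw [invinv, invinv]
        have harg : f (f p q (inv p)) q (inv (f p q (inv p))) = p := by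
          rw [F2 p q hp]
          show inv ((f p q)⁻¹ (inv (inv (f p q (inv p))))) = p
          rw [invinv, show ∀ x, (f p q)⁻¹ ((f p q) x) = x from fun x => Equiv.symm_apply_apply _ x, invinv]
        rw [hk, harg] at hc
        have key : ι p * ι (L.op (f p q (inv p)) q) = ψ (f p q) * ι q := by
          have e1 := hrel (f p q (inv p)) q
          have hψc : ψ (f p q) * ψ ((f p q)⁻¹) = 1 := by
            rw [← hψmul, inv_mul_cancel, hψ1]
          calc ι p * ι (L.op (f p q (inv p)) q)
              = (ψ (f p q) * ψ ((f p q)⁻¹)) * (ι p * ι (L.op (f p q (inv p)) q)) := by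
                rw [hψc, one_mul]
            _ = ψ (f p q) * ((ψ ((f p q)⁻¹) * ι p) * ι (L.op (f p q (inv p)) q)) := by
                group
            _ = ψ (f p q) * ((ι (inv (f p q (inv p))) * ψ (f (f p q (inv p)) q)) *
                  ι (L.op (f p q (inv p)) q)) := by rw [← hc]
            _ = ψ (f p q) * (ι (inv (f p q (inv p))) *
                  (ψ (f (f p q (inv p)) q) * ι (L.op (f p q (inv p)) q))) := by
                group
            _ = ψ (f p q) * (ι (inv (f p q (inv p))) * (ι (f p q (inv p)) * ι q)) := by
                rw [← e1]
            _ = ψ (f p q) * ((ι (inv (f p q (inv p))) * ι (f p q (inv p))) * ι q) := by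
                group
            _ = ψ (f p q) * ι q := by rw [iotainv_l, one_mul]
        have e2 := hrel p (L.op (f p q (inv p)) q)
        rw [e2] at key
        exact (huniq _ (memf _ _) _ (memf _ _) _ _ key).2
    -- B2
    intro x y
    have hd := Ldiv y x
    have h1 := B1 y (L.op (f y x (inv y)) x)
    rw [hd] at h1
    have h2 : f y (L.op (f y x (inv y)) x) = f y x := by
      rw [hA y (L.op (f y x (inv y)) x), hd]
    rw [h2] at h1
    rw [h1, inv_inv]
  constructor
  · constructor
    · intro hA
      exact ⟨fun x y => ⟨L.op (L.op x y) x, (MAIN hA).1 x y⟩, (MAIN hA).2⟩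
    · rintro ⟨h1, h2⟩ x y
      obtain ⟨z, hz⟩ := h1 x y
      have e3 : ψ (f (L.op x y) x * f x y) * ι (L.op (L.op x y) x) = ψ 1 * ι z := by
        rw [hψ1, one_mul, ← hz, hψmul]
        symm
        calc ι x * ι y * ι x = ψ (f x y) * ι (L.op x y) * ι x := by rw [hrel]
          _ = ψ (f x y) * (ψ (f (L.op x y) x) * ι (L.op (L.op x y) x)) := by
              rw [mul_assoc, hrel]
          _ = ψ (f x y) * ψ (f (L.op x y) x) * ι (L.op (L.op x y) x) := by group
      have h4 := huniq _ ((innerGroup f).mul_mem (memf _ _) (memf _ _)) _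
        (Subgroup.one_mem _) _ _ e3
      have h5 : f (L.op x y) x = (f x y)⁻¹ := eq_inv_of_mul_eq_one_left h4.1
      have h6 := h2 x (L.op x y)
      rw [h5] at h6
      exact (inv_injective h6).symm
  · intro hA x y
    exact (MAIN hA).1 x y
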